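/- arXiv:1303.1026 — 2 statements merged into one kernel-verified Lean document; each statement's English description precedes it below -/
import Mathlib

section
/- The limit lim_{q→∞} C(3,q)/(q^3/3) exists and equals 4/9, where the limit is taken over integers q tending to infinity. -/
/-- Two words `u` and `v` of length `n` over alphabet `F` are overlapping if some
non-empty proper prefix of one equals a non-empty proper suffix of the other. -/
def Overlapping {F : Type*} {n : ℕ} (u v : Fin n → F) : Prop :=
  ∃ m : ℕ, ∃ _h1 : 0 < m, ∃ h2 : m < n,
    ((∀ i : ℕ, ∀ hi : i < m, u ⟨i, hi.trans h2⟩ = v ⟨n - m + i, by omega⟩) ∨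
     (∀ i : ℕ, ∀ hi : i < m, v ⟨i, hi.trans h2⟩ = u ⟨n - m + i, by omega⟩))

/-- A code `C ⊆ F^n` is non-overlapping if every two (not necessarily distinct)
codewords are non-overlapping. -/
def NonOverlappingCode {F : Type*} {n : ℕ} (C : Set (Fin n → F)) : Prop :=
  ∀ u ∈ C, ∀ v ∈ C, ¬ Overlapping u v

/-- `maxNOCode n q` is `C(n,q)`, the maximum cardinality of a non-overlapping
`q`-ary code of length `n`. -/
noncomputable def maxNOCode (n q : ℕ) : ℕ :=
  sSup {m | ∃ C : Set (Fin n → Fin q), NonOverlappingCode C ∧ C.ncard = m}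

lemma overlapping_iff {F : Type*} (u v : Fin 3 → F) :
    Overlapping u v ↔ (u 0 = v 2 ∨ v 0 = u 2 ∨ (u 0 = v 1 ∧ u 1 = v 2) ∨ (v 0 = u 1 ∧ v 1 = u 2)) := by
  constructor
  · rintro ⟨m, h1, h2, H | H⟩
    · interval_cases m
      · exact Or.inl (H 0 one_pos)
      · exact Or.inr (Or.inr (Or.inl ⟨H 0 two_pos, H 1 one_lt_two⟩))
    · interval_cases m
      · exact Or.inr (Or.inl (H 0 one_pos))
      · exact Or.inr (Or.inr (Or.inr ⟨H 0 two_pos, H 1 one_lt_two⟩))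
  · rintro (h | h | ⟨h1, h2⟩ | ⟨h1, h2⟩)
    · exact ⟨1, one_pos, by omega, Or.inl (by intro i hi; interval_cases i; exact h)⟩
    · exact ⟨1, one_pos, by omega, Or.inr (by intro i hi; interval_cases i; exact h)⟩
    · exact ⟨2, two_pos, by omega, Or.inl (by intro i hi; interval_cases i; exacts [h1, h2])⟩
    · exact ⟨2, two_pos, by omega, Or.inr (by intro i hi; interval_cases i; exacts [h1, h2])⟩

lemma real_key (q a b r t : ℝ) (ha0 : 0 ≤ a) (hb0 : 0 ≤ b) (hr0 : 0 ≤ r) (ht0 : 0 ≤ t)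
    (hr : r ≤ a * b) (htr : t + r ≤ a * b) (hq : a + b ≤ q) :
    27 * (a * r + b * t + (q - a - b) * (a * b)) ≤ 4 * q ^ 3 := by
  rcases le_total b a with hc | hc
  · have s1 : a * r + b * t + (q - a - b) * (a * b) ≤ a * b * (q - b) := by
      nlinarith [mul_nonneg (sub_nonneg.2 hc) ht0, mul_nonneg ha0 (by linarith : (0:ℝ) ≤ a*b - (t+r))]
    have s2 : a * b * (q - b) ≤ b * (q - b)^2 := by
      nlinarith [mul_nonneg (mul_nonneg hb0 (by linarith : (0:ℝ) ≤ q - b)) (by linarith : (0:ℝ) ≤ q - b - a)]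
    have s3 : 27 * (b * (q - b)^2) ≤ 4 * q ^ 3 := by
      nlinarith [mul_nonneg (sq_nonneg (3*b - q)) (by linarith : (0:ℝ) ≤ 4*q - 3*b)]
    linarith
  · have s1 : a * r + b * t + (q - a - b) * (a * b) ≤ a * b * (q - a) := by
      nlinarith [mul_nonneg (sub_nonneg.2 hc) hr0, mul_nonneg hb0 (by linarith : (0:ℝ) ≤ a*b - (t+r))]
    have s2 : a * b * (q - a) ≤ a * (q - a)^2 := by
      nlinarith [mul_nonneg (mul_nonneg ha0 (by linarith : (0:ℝ) ≤ q - a)) (by linarith : (0:ℝ) ≤ q - a - b)]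
    have s3 : 27 * (a * (q - a)^2) ≤ 4 * q ^ 3 := by
      nlinarith [mul_nonneg (sq_nonneg (3*a - q)) (by linarith : (0:ℝ) ≤ 4*q - 3*a)]
    linarith

open Finset in
lemma upper_bound (q : ℕ) (C : Set (Fin 3 → Fin q)) (h : NonOverlappingCode C) :
    27 * C.ncard ≤ 4 * q ^ 3 := by
  classical
  set D : Finset (Fin 3 → Fin q) := C.toFinite.toFinset with hD
  have hmem : ∀ w, w ∈ D ↔ w ∈ C := fun w => C.toFinite.mem_toFinset
  have hcard : C.ncard = D.card := Set.ncard_eq_toFinset_card C C.toFinite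
  -- basic overlap consequences
  have hov : ∀ u ∈ D, ∀ v ∈ D, ¬ (u 0 = v 2 ∨ v 0 = u 2 ∨ (u 0 = v 1 ∧ u 1 = v 2) ∨ (v 0 = u 1 ∧ v 1 = u 2)) := by
    intro u hu v hv hor
    exact h u ((hmem u).1 hu) v ((hmem v).1 hv) ((overlapping_iff u v).2 hor)
  set A : Finset (Fin q) := D.image (fun w => w 0) with hA
  set B : Finset (Fin q) := D.image (fun w => w 2) with hB
  set Pp : Finset (Fin q × Fin q) := D.image (fun w => (w 0, w 1)) with hPp
  set Ss : Finset (Fin q × Fin q) := D.image (fun w => (w 1, w 2)) with hSs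
  set col : Fin q → Finset (Fin q) := fun m => A.filter (fun a => (a, m) ∈ Pp) with hcol
  set row : Fin q → Finset (Fin q) := fun m => B.filter (fun b => (m, b) ∈ Ss) with hrow
  set srow : Fin q → Finset (Fin q) := fun m => A.filter (fun a => (a, m) ∈ Ss) with hsrow
  set α := A.card with hα
  set β := B.card with hβ
  -- A and B are disjoint
  have hABdisj : Disjoint A B := by
    rw [Finset.disjoint_left]
    rintro x hxA hxB
    simp only [hA, hB, Finset.mem_image] at hxA hxB
    obtain ⟨u, hu, hu0⟩ := hxA
    obtain ⟨v, hv, hv2⟩ := hxB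
    exact hov u hu v hv (Or.inl (hu0.trans hv2.symm))
  -- col and srow are disjoint
  have hcoldisj : ∀ m, Disjoint (col m) (srow m) := by
    intro m
    rw [Finset.disjoint_left]
    rintro a haP haS
    simp only [hcol, hsrow, Finset.mem_filter, hPp, hSs, Finset.mem_image] at haP haS
    obtain ⟨-, u, hu, hu01⟩ := haP
    obtain ⟨-, v, hv, hv12⟩ := haS
    have h1 : u 0 = v 1 := by rw [Prod.ext_iff] at hu01 hv12; simp_all
    have h2 : u 1 = v 2 := by rw [Prod.ext_iff] at hu01 hv12; simp_all
    exact hov u hu v hv (Or.inr (Or.inr (Or.inl ⟨h1, h2⟩)))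
  -- fiber counting: |D| ≤ ∑ c m * r m
  have hfiber : D.card ≤ ∑ m : Fin q, (col m).card * (row m).card := by
    rw [Finset.card_eq_sum_card_fiberwise (f := fun w => w 1) (t := Finset.univ) (fun x _ => Finset.mem_univ _)]
    apply Finset.sum_le_sum
    intro m _
    rw [← Finset.card_product]
    apply Finset.card_le_card_of_injOn (fun w => (w 0, w 2))
    · intro w hw
      simp only [Finset.mem_coe, Finset.mem_filter] at hw
      obtain ⟨hwD, hw1⟩ := hw
      simp only [Finset.mem_coe, Finset.mem_product, hcol, hrow, Finset.mem_filter, hA, hB, hPp, hSs, Finset.mem_image]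
      refine ⟨⟨⟨w, hwD, rfl⟩, ⟨w, hwD, ?_⟩⟩, ⟨⟨w, hwD, rfl⟩, ⟨w, hwD, ?_⟩⟩⟩
      · rw [hw1]
      · rw [hw1]
    · intro w hw v hv hwv
      simp only [Finset.mem_coe, Finset.mem_filter] at hw hv
      have h02 : w 0 = v 0 ∧ w 2 = v 2 := Prod.ext_iff.mp hwv
      funext i
      fin_cases i
      · exact h02.1
      · exact hw.2.trans hv.2.symm
      · exact h02.2
  -- bounds
  have hcle : ∀ m, (col m).card ≤ α := fun m => Finset.card_le_card (Finset.filter_subset _ _)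
  have hrle : ∀ m, (row m).card ≤ β := fun m => Finset.card_le_card (Finset.filter_subset _ _)
  have hcs : ∀ m, (col m).card + (srow m).card ≤ α := by
    intro m
    rw [← Finset.card_union_of_disjoint (hcoldisj m)]
    apply Finset.card_le_card
    exact Finset.union_subset (Finset.filter_subset _ _) (Finset.filter_subset _ _)
  set R := ∑ m ∈ A, (row m).card with hR
  set T := ∑ m ∈ B, (col m).card with hT
  -- ∑_{m∈B} srow m = R
  have hswap : ∑ m ∈ B, (srow m).card = R := by
    simp only [hR, hsrow, hrow, Finset.card_filter]
    rw [Finset.sum_comm]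
  have hTR : T + R ≤ α * β := by
    rw [← hswap, hT, ← Finset.sum_add_distrib]
    calc ∑ m ∈ B, ((col m).card + (srow m).card) ≤ ∑ m ∈ B, α := Finset.sum_le_sum (fun m _ => hcs m)
    _ = α * β := by rw [Finset.sum_const, smul_eq_mul, mul_comm]
  have hRle : R ≤ α * β := by
    calc R ≤ ∑ m ∈ A, β := Finset.sum_le_sum (fun m _ => hrle m)
    _ = α * β := by rw [Finset.sum_const, smul_eq_mul, mul_comm]
  have hαβq : α + β ≤ q := by
    have := Finset.card_le_card (Finset.subset_univ (A ∪ B))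
    rwa [Finset.card_union_of_disjoint hABdisj, Finset.card_univ, Fintype.card_fin] at this
  -- split the sum
  have hsplit : ∑ m : Fin q, (col m).card * (row m).card
      ≤ α * R + β * T + (q - α - β) * (α * β) := by
    have hBsub : B ⊆ Finset.univ \ A := by
      intro b hb
      simp only [Finset.mem_sdiff, Finset.mem_univ, true_and]
      exact Finset.disjoint_right.1 hABdisj hb
    rw [← Finset.sum_sdiff (Finset.subset_univ A), ← Finset.sum_sdiff hBsub]
    have e1 : ∑ m ∈ A, (col m).card * (row m).card ≤ α * R := by
      rw [hR, Finset.mul_sum]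
      exact Finset.sum_le_sum (fun m _ => Nat.mul_le_mul_right _ (hcle m))
    have e2 : ∑ m ∈ B, (col m).card * (row m).card ≤ β * T := by
      rw [hT, Finset.mul_sum]
      exact Finset.sum_le_sum (fun m _ => by rw [mul_comm β]; exact Nat.mul_le_mul_left _ (hrle m))
    have e3 : ∑ m ∈ (Finset.univ \ A) \ B, (col m).card * (row m).card ≤ (q - α - β) * (α * β) := by
      calc ∑ m ∈ (Finset.univ \ A) \ B, (col m).card * (row m).card
          ≤ ∑ _m ∈ (Finset.univ \ A) \ B, α * β :=
            Finset.sum_le_sum (fun m _ => Nat.mul_le_mul (hcle m) (hrle m))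
        _ = ((Finset.univ \ A) \ B).card * (α * β) := by rw [Finset.sum_const, smul_eq_mul]
        _ = (q - α - β) * (α * β) := by
            rw [Finset.card_sdiff_of_subset hBsub, Finset.card_sdiff_of_subset (Finset.subset_univ A),
              Finset.card_univ, Fintype.card_fin]
    omega
  -- now real arithmetic
  have hmain : D.card ≤ α * R + β * T + (q - α - β) * (α * β) := hfiber.trans hsplit
  rw [hcard]
  have hq : (α : ℝ) + β ≤ q := by exact_mod_cast hαβq
  have hcast : (D.card : ℝ) ≤ α * R + β * T + ((q : ℝ) - α - β) * (α * β) := by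
    have h2 := (Nat.cast_le (α := ℝ)).2 hmain
    have e : ((q - α - β : ℕ) : ℝ) = (q : ℝ) - α - β := by
      rw [Nat.cast_sub (by omega), Nat.cast_sub (by omega : α ≤ q)]
    push_cast [e] at h2
    convert h2 using 2
  have hR' : (R : ℝ) ≤ α * β := by exact_mod_cast hRle
  have hTR' : (T : ℝ) + R ≤ α * β := by exact_mod_cast hTR
  have goalR : (27:ℝ) * D.card ≤ 4 * q ^ 3 := by
    have := real_key (q:ℝ) α β R T (Nat.cast_nonneg _) (Nat.cast_nonneg _) (Nat.cast_nonneg _)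
      (Nat.cast_nonneg _) hR' hTR' hq
    nlinarith [this, hcast]
  exact_mod_cast goalR

open Finset

lemma card_filter_lt (q k : ℕ) (hk : k ≤ q) :
    ((univ : Finset (Fin q)).filter (fun x : Fin q => x.val < k)).card = k := by
  have key : ((univ : Finset (Fin q)).filter (fun x : Fin q => x.val < k)).card = (Finset.range k).card := by
    refine Finset.card_bij (fun (x : Fin q) (_ : x ∈ (univ : Finset (Fin q)).filter (fun x : Fin q => x.val < k)) => (x : ℕ)) ?_ ?_ ?_
    · intro x hx
      simp only [Finset.mem_filter] at hx
      simp [hx.2]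
    · intro x hx y hy hxy
      exact Fin.ext hxy
    · intro m hm
      simp only [Finset.mem_range] at hm
      exact ⟨⟨m, by omega⟩, by simp [hm], rfl⟩
  rwa [Finset.card_range] at key

lemma card_filter_ge (q k : ℕ) (hk : k ≤ q) :
    ((univ : Finset (Fin q)).filter (fun x : Fin q => k ≤ x.val)).card = q - k := by
  have h := Finset.card_filter_add_card_filter_not
    (s := (univ : Finset (Fin q))) (p := fun x : Fin q => x.val < k)
  rw [card_filter_lt q k hk, Finset.card_univ, Fintype.card_fin] at h
  have e : (univ : Finset (Fin q)).filter (fun x : Fin q => ¬ x.val < k)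
      = (univ : Finset (Fin q)).filter (fun x : Fin q => k ≤ x.val) := by
    apply Finset.filter_congr; intro x _; simp [not_lt]
  rw [e] at h
  omega

lemma bddAbove_codes (q : ℕ) :
    BddAbove {m | ∃ C : Set (Fin 3 → Fin q), NonOverlappingCode C ∧ C.ncard = m} := by
  refine ⟨q ^ 3, ?_⟩
  rintro m ⟨C, -, rfl⟩
  have : C.ncard ≤ (Set.univ : Set (Fin 3 → Fin q)).ncard :=
    Set.ncard_le_ncard (Set.subset_univ C) (Set.finite_univ)
  rwa [Set.ncard_univ, Nat.card_eq_fintype_card, Fintype.card_fun, Fintype.card_fin,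
    Fintype.card_fin] at this

lemma zero_mem_codes (q : ℕ) :
    0 ∈ {m | ∃ C : Set (Fin 3 → Fin q), NonOverlappingCode C ∧ C.ncard = m} :=
  ⟨∅, fun u hu => absurd hu (Set.notMem_empty u), Set.ncard_empty _⟩

lemma lower_bound (q : ℕ) : q / 3 * (q - q / 3) ^ 2 ≤ maxNOCode 3 q := by
  classical
  set k := q / 3 with hk
  have hkq : k ≤ q := Nat.div_le_self q 3
  set s : Fin 3 → Finset (Fin q) :=
    ![(univ : Finset (Fin q)).filter (fun x : Fin q => x.val < k),
      (univ : Finset (Fin q)).filter (fun x : Fin q => k ≤ x.val),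
      (univ : Finset (Fin q)).filter (fun x : Fin q => k ≤ x.val)] with hs
  set Cl : Set (Fin 3 → Fin q) := ↑(Fintype.piFinset s) with hCl
  have hmem : ∀ w : Fin 3 → Fin q, w ∈ Cl ↔
      ((w 0 : ℕ) < k ∧ k ≤ (w 1 : ℕ) ∧ k ≤ (w 2 : ℕ)) := by
    intro w
    simp only [hCl, Finset.mem_coe, Fintype.mem_piFinset]
    constructor
    · intro hw
      have h0 := hw 0; have h1 := hw 1; have h2 := hw 2
      simp [hs] at h0 h1 h2
      exact ⟨h0, h1, h2⟩
    · rintro ⟨h0, h1, h2⟩ i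
      fin_cases i <;> simp [hs, h0, h1, h2]
  have hNO : NonOverlappingCode Cl := by
    intro u hu v hv hov
    rw [hmem] at hu hv
    rw [overlapping_iff] at hov
    have e2 : ∀ x y : Fin q, x = y → (x:ℕ) = y := fun x y h => by rw [h]
    rcases hov with h | h | ⟨h, -⟩ | ⟨h, -⟩ <;> have := e2 _ _ h <;> omega
  have hcard : Cl.ncard = k * (q - k) ^ 2 := by
    rw [hCl, Set.ncard_coe_finset, Fintype.card_piFinset]
    rw [Fin.prod_univ_three]
    show (filter (fun x : Fin q => x.val < k) univ).card * (filter (fun x : Fin q => k ≤ x.val) univ).card * (filter (fun x : Fin q => k ≤ x.val) univ).card = _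
    rw [card_filter_lt q k hkq, card_filter_ge q k hkq]
    ring
  apply le_csSup (bddAbove_codes q)
  exact ⟨Cl, hNO, hcard⟩

open Filter

/-- Theorem 5 of Blackburn, "Non-overlapping codes": `lim_{q→∞} C(3,q)/(q³/3) = 4/9`. -/
theorem stmt17 :
    Filter.Tendsto (fun q : ℕ => (maxNOCode 3 q : ℝ) / ((q : ℝ) ^ 3 / 3))
      Filter.atTop (nhds (4 / 9)) := by
  have hub : ∀ q : ℕ, 27 * maxNOCode 3 q ≤ 4 * q ^ 3 := by
    intro q
    obtain ⟨C, hC, hcard⟩ := Nat.sSup_mem ⟨0, zero_mem_codes q⟩ (bddAbove_codes q)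
    rw [maxNOCode, ← hcard]
    exact upper_bound q C hC
  have hlb : ∀ q : ℕ, q / 3 * (q - q / 3) ^ 2 ≤ maxNOCode 3 q := lower_bound
  have hg : Tendsto (fun q : ℕ => ((q / 3 : ℕ) : ℝ) / (q : ℝ)) atTop (nhds (1 / 3)) := by
    apply tendsto_of_tendsto_of_tendsto_of_le_of_le'
      (g := fun q : ℕ => 1 / 3 - 1 / (q : ℝ)) (h := fun _ => (1 : ℝ) / 3)
    · have := Tendsto.sub
        (tendsto_const_nhds : Tendsto (fun _ : ℕ => (1:ℝ)/3) atTop (nhds (1/3)))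
        tendsto_one_div_atTop_nhds_zero_nat
      simpa using this
    · exact tendsto_const_nhds
    · filter_upwards [eventually_ge_atTop 1] with q hq
      have hq0 : (0 : ℝ) < q := by exact_mod_cast hq
      have h1 : (q : ℝ) - 2 ≤ 3 * ((q / 3 : ℕ) : ℝ) := by
        have : q ≤ 3 * (q / 3) + 2 := by omega
        have := (Nat.cast_le (α := ℝ)).2 this
        push_cast at this
        linarith
      rw [sub_le_iff_le_add, ← add_div, div_le_div_iff₀ (by norm_num) hq0]
      linarith
    · filter_upwards [eventually_ge_atTop 1] with q hq
      have hq0 : (0 : ℝ) < q := by exact_mod_cast hq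
      have h1 : 3 * ((q / 3 : ℕ) : ℝ) ≤ q := by
        have : 3 * (q / 3) ≤ q := by omega
        exact_mod_cast this
      rw [div_le_div_iff₀ hq0 (by norm_num)]
      linarith
  have hL : Tendsto (fun q : ℕ => 3 * (((q / 3 : ℕ) : ℝ) / q) * (1 - ((q / 3 : ℕ) : ℝ) / q) ^ 2)
      atTop (nhds (4 / 9)) := by
    have hc : Continuous fun x : ℝ => 3 * x * (1 - x) ^ 2 := by continuity
    have := (hc.tendsto (1 / 3)).comp hg
    convert this using 2
    all_goals norm_num
  apply tendsto_of_tendsto_of_tendsto_of_le_of_le' hL tendsto_const_nhds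
  · -- lower ≤ f
    filter_upwards [eventually_ge_atTop 1] with q hq
    have hq0 : (0 : ℝ) < q := by exact_mod_cast hq
    set k := q / 3 with hk
    have hkq : k ≤ q := Nat.div_le_self q 3
    have hlow := (Nat.cast_le (α := ℝ)).2 (hlb q)
    have hcast : ((q / 3 * (q - q / 3) ^ 2 : ℕ) : ℝ) = (k : ℝ) * ((q : ℝ) - k) ^ 2 := by
      simp only [hk]
      push_cast [Nat.cast_sub (Nat.div_le_self q 3)]
      ring
    rw [hcast] at hlow
    have hrw : 3 * ((k : ℝ) / q) * (1 - (k : ℝ) / q) ^ 2 = (k : ℝ) * ((q : ℝ) - k) ^ 2 / ((q : ℝ) ^ 3 / 3) := by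
      field_simp
    rw [hrw]
    gcongr
  · -- f ≤ 4/9
    filter_upwards [eventually_ge_atTop 1] with q hq
    have hq0 : (0 : ℝ) < q := by exact_mod_cast hq
    have h27 := (Nat.cast_le (α := ℝ)).2 (hub q)
    push_cast at h27
    rw [div_le_div_iff₀ (by positivity) (by norm_num)]
    nlinarith
end

section
/- There exist absolute positive real constants c₁ and c₂ such that c₁·(q^n/n) ≤ C(n,q) ≤ c₂·(q^n/n) for all integers n and q with n ≥ 2 and q ≥ 2. -/
/-! ### Auxiliary definitions and lemmas -/

open Finset

/-- The structural condition defining our non-overlapping code. -/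
def BGood (n q s k : ℕ) (w : Fin n → Fin q) : Prop :=
  (∀ a : Fin n, a.val < k → (w a).val < s) ∧
  (∀ a : Fin n, a.val = k → s ≤ (w a).val) ∧
  (∀ a : Fin n, a.val = n - 1 → s ≤ (w a).val) ∧
  (∀ j : ℕ, k ≤ j → j + k ≤ n → ∃ a : Fin n, j ≤ a.val ∧ a.val < j + k ∧ s ≤ (w a).val)

noncomputable def GoodFin (n q s k : ℕ) : Finset (Fin n → Fin q) :=
  @Finset.filter _ (BGood n q s k) (Classical.decPred _) Finset.univ

lemma mem_GoodFin {n q s k : ℕ} {w : Fin n → Fin q} :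
    w ∈ GoodFin n q s k ↔ BGood n q s k w := by
  unfold GoodFin; rw [@Finset.mem_filter _ _ (Classical.decPred _)]; simp

def Iset (q s : ℕ) : Finset (Fin q) := Finset.univ.filter (fun a => a.val < s)

lemma mem_Iset {q s : ℕ} {a : Fin q} : a ∈ Iset q s ↔ a.val < s := by simp [Iset]

lemma card_Iset {q s : ℕ} (h : s < q) : (Iset q s).card = s := by
  have e : Iset q s = Finset.Iio (⟨s, h⟩ : Fin q) := by ext a; simp [Iset, Fin.lt_def]
  rw [e, Fin.card_Iio]

lemma card_Isetc {q s : ℕ} (h : s < q) : ((Iset q s)ᶜ).card = q - s := by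
  rw [Finset.card_compl, card_Iset h, Fintype.card_fin]

lemma bgood_aux {n q s k : ℕ} (hk : 0 < k) (hkn : k < n)
    {u v : Fin n → Fin q} (hu : BGood n q s k u) (hv : BGood n q s k v)
    (m : ℕ) (h1 : 0 < m) (h2 : m < n)
    (H : ∀ i : ℕ, ∀ hi : i < m, u ⟨i, hi.trans h2⟩ = v ⟨n - m + i, by omega⟩) : False := by
  obtain ⟨hu1, hu2, hu3, hu4⟩ := hu
  obtain ⟨hv1, hv2, hv3, hv4⟩ := hv
  rcases le_or_gt m k with hmk | hmk
  · have h := H (m - 1) (by omega)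
    have hus : (u ⟨m - 1, by omega⟩).val < s := hu1 _ (by simp; omega)
    have hvs : s ≤ (v ⟨n - m + (m - 1), by omega⟩).val := hv3 _ (by simp; omega)
    rw [h] at hus; omega
  · rcases le_or_gt k (n - m) with hj | hj
    · obtain ⟨a, ha1, ha2, ha3⟩ := hv4 (n - m) hj (by omega)
      have h := H (a.val - (n - m)) (by omega)
      have e : v ⟨n - m + (a.val - (n - m)), by omega⟩ = v a := by
        congr 1; exact Fin.ext (by simp; omega)
      rw [e] at h
      have hus : (u ⟨a.val - (n - m), by omega⟩).val < s := hu1 _ (by simp; omega)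
      rw [h] at hus; omega
    · have h := H (k - (n - m)) (by omega)
      have e : v ⟨n - m + (k - (n - m)), by omega⟩ = v ⟨k, hkn⟩ := by
        congr 1; exact Fin.ext (by simp; omega)
      rw [e] at h
      have hus : (u ⟨k - (n - m), by omega⟩).val < s := hu1 _ (by simp; omega)
      have hvs : s ≤ (v ⟨k, hkn⟩).val := hv2 _ rfl
      rw [h] at hus; omega

lemma bgood_nonoverlapping {n q s k : ℕ} (hk : 0 < k) (hkn : k < n) :
    NonOverlappingCode {w : Fin n → Fin q | BGood n q s k w} := by
  rintro u hu v hv ⟨m, h1, h2, H | H⟩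
  · exact bgood_aux hk hkn hu hv m h1 h2 H
  · exact bgood_aux hk hkn hv hu m h1 h2 H

lemma goodFin_nonoverlapping {n q s k : ℕ} (hk : 0 < k) (hkn : k < n) :
    NonOverlappingCode (↑(GoodFin n q s k) : Set (Fin n → Fin q)) := by
  have e : (↑(GoodFin n q s k) : Set (Fin n → Fin q)) = {w | BGood n q s k w} := by
    ext w; simp [mem_GoodFin]
  rw [e]; exact bgood_nonoverlapping hk hkn

/-! ### Counting the construction -/

lemma prod_piece (n k s q : ℕ) (hk : k + 2 ≤ n) :
    (∏ x ∈ Finset.range n,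
      (if x < k then s else if x = k then q - s else if x = n-1 then q - s else q))
      = s ^ k * (q-s)^2 * q ^ (n - k - 2) := by
  rw [Finset.range_eq_Ico,
    ← Finset.prod_Ico_consecutive _ (Nat.zero_le k) (by omega : k ≤ n),
    ← Finset.prod_Ico_consecutive _ (by omega : k ≤ k+1) (by omega : k+1 ≤ n),
    ← Finset.prod_Ico_consecutive _ (by omega : k+1 ≤ n-1) (by omega : n-1 ≤ n)]
  have e1 : ∏ x ∈ Finset.Ico 0 k, (if x < k then s else if x = k then q - s else if x = n-1 then q - s else q) = s ^ k := by
    have h : ∀ x ∈ Finset.Ico 0 k, (if x < k then s else if x = k then q - s else if x = n-1 then q - s else q) = s := by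
      intro x hx; simp only [Finset.mem_Ico] at hx; simp [hx.2]
    rw [Finset.prod_congr rfl h, Finset.prod_const, Nat.card_Ico]; congr 1
  have e2 : ∏ x ∈ Finset.Ico k (k+1), (if x < k then s else if x = k then q - s else if x = n-1 then q - s else q) = q - s := by
    rw [Nat.Ico_succ_singleton, Finset.prod_singleton]; simp
  have e3 : ∏ x ∈ Finset.Ico (k+1) (n-1), (if x < k then s else if x = k then q - s else if x = n-1 then q - s else q) = q ^ (n-k-2) := by
    have h : ∀ x ∈ Finset.Ico (k+1) (n-1), (if x < k then s else if x = k then q - s else if x = n-1 then q - s else q) = q := by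
      intro x hx; simp only [Finset.mem_Ico] at hx
      rw [if_neg (by omega), if_neg (by omega), if_neg (by omega)]
    rw [Finset.prod_congr rfl h, Finset.prod_const, Nat.card_Ico]
    congr 1; omega
  have e4 : ∏ x ∈ Finset.Ico (n-1) n, (if x < k then s else if x = k then q - s else if x = n-1 then q - s else q) = q - s := by
    have h : Finset.Ico (n-1) n = {n-1} := by
      rw [← Nat.Ico_succ_singleton]; congr 1; omega
    rw [h, Finset.prod_singleton, if_neg (by omega), if_neg (by omega), if_pos rfl]
  rw [e1, e2, e3, e4]; ring

lemma prod_pieceBad (n k s q j : ℕ) (hjk : k ≤ j) (hjn : j + k ≤ n) :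
    (∏ x ∈ Finset.range n, (if x < k ∨ (j ≤ x ∧ x < j + k) then s else q))
      = s ^ (2*k) * q ^ (n - 2*k) := by
  rw [Finset.range_eq_Ico,
    ← Finset.prod_Ico_consecutive _ (Nat.zero_le k) (by omega : k ≤ n),
    ← Finset.prod_Ico_consecutive _ (by omega : k ≤ j) (by omega : j ≤ n),
    ← Finset.prod_Ico_consecutive _ (by omega : j ≤ j + k) (by omega : j + k ≤ n)]
  have e1 : ∏ x ∈ Finset.Ico 0 k, (if x < k ∨ (j ≤ x ∧ x < j + k) then s else q) = s ^ k := by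
    have h : ∀ x ∈ Finset.Ico 0 k, (if x < k ∨ (j ≤ x ∧ x < j + k) then s else q) = s := by
      intro x hx; simp only [Finset.mem_Ico] at hx; rw [if_pos (Or.inl hx.2)]
    rw [Finset.prod_congr rfl h, Finset.prod_const, Nat.card_Ico]; congr 1
  have e2 : ∏ x ∈ Finset.Ico k j, (if x < k ∨ (j ≤ x ∧ x < j + k) then s else q) = q ^ (j - k) := by
    have h : ∀ x ∈ Finset.Ico k j, (if x < k ∨ (j ≤ x ∧ x < j + k) then s else q) = q := by
      intro x hx; simp only [Finset.mem_Ico] at hx; rw [if_neg (by omega)]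
    rw [Finset.prod_congr rfl h, Finset.prod_const, Nat.card_Ico]
  have e3 : ∏ x ∈ Finset.Ico j (j+k), (if x < k ∨ (j ≤ x ∧ x < j + k) then s else q) = s ^ k := by
    have h : ∀ x ∈ Finset.Ico j (j+k), (if x < k ∨ (j ≤ x ∧ x < j + k) then s else q) = s := by
      intro x hx; simp only [Finset.mem_Ico] at hx; rw [if_pos (Or.inr hx)]
    rw [Finset.prod_congr rfl h, Finset.prod_const, Nat.card_Ico]
    congr 1; omega
  have e4 : ∏ x ∈ Finset.Ico (j+k) n, (if x < k ∨ (j ≤ x ∧ x < j + k) then s else q) = q ^ (n - j - k) := by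
    have h : ∀ x ∈ Finset.Ico (j+k) n, (if x < k ∨ (j ≤ x ∧ x < j + k) then s else q) = q := by
      intro x hx; simp only [Finset.mem_Ico] at hx; rw [if_neg (by omega)]
    rw [Finset.prod_congr rfl h, Finset.prod_const, Nat.card_Ico]
    congr 1; omega
  rw [e1, e2, e3, e4]
  have h1 : s ^ k * (q ^ (j-k) * (s ^ k * q ^ (n - j - k))) = (s^k * s^k) * (q^(j-k) * q^(n-j-k)) := by ring
  have h2 : k + k = 2*k := by ring
  have h3 : (j-k) + (n-j-k) = n - 2*k := by omega
  rw [h1, ← pow_add, ← pow_add, h2, h3]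

lemma prod_pieceB (n s q : ℕ) (hn : 1 ≤ n) :
    (∏ x ∈ Finset.range n, (if x < n - 1 then s else q - s)) = s ^ (n-1) * (q - s) := by
  rw [Finset.range_eq_Ico, ← Finset.prod_Ico_consecutive _ (Nat.zero_le (n-1)) (by omega : n-1 ≤ n)]
  have e1 : ∏ x ∈ Finset.Ico 0 (n-1), (if x < n - 1 then s else q - s) = s ^ (n-1) := by
    have h : ∀ x ∈ Finset.Ico 0 (n-1), (if x < n-1 then s else q - s) = s := by
      intro x hx; simp only [Finset.mem_Ico] at hx; rw [if_pos hx.2]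
    rw [Finset.prod_congr rfl h, Finset.prod_const, Nat.card_Ico]; congr 1
  have e2 : ∏ x ∈ Finset.Ico (n-1) n, (if x < n - 1 then s else q - s) = q - s := by
    have h : Finset.Ico (n-1) n = {n-1} := by rw [← Nat.Ico_succ_singleton]; congr 1; omega
    rw [h, Finset.prod_singleton, if_neg (by omega)]
  rw [e1, e2]

lemma countA (n q s k : ℕ) (hs : s < q) (hk1 : 1 ≤ k) (hk2 : k + 2 ≤ n) :
    s^k * (q-s)^2 * q^(n-k-2)
      ≤ (GoodFin n q s k).card + (n - k + 1 - k) * (s^(2*k) * q^(n-2*k)) := by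
  classical
  set I := Iset q s with hI
  set tA : Fin n → Finset (Fin q) := fun a =>
    if a.val < k then I else if a.val = k then Iᶜ else if a.val = n-1 then Iᶜ else univ with htA
  set Base := Fintype.piFinset tA with hBase
  set Bad : ℕ → Finset (Fin n → Fin q) := fun j =>
    Fintype.piFinset (fun a => if a.val < k ∨ (j ≤ a.val ∧ a.val < j + k) then I else univ) with hBad
  have cardBase : Base.card = s^k * (q-s)^2 * q^(n-k-2) := by
    rw [hBase, Fintype.card_piFinset]
    have h : ∀ a : Fin n, (tA a).card =
        (fun x => if x < k then s else if x = k then q - s else if x = n-1 then q - s else q) a.val := by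
      intro a; rw [htA]; dsimp only
      split_ifs <;> simp [hI, card_Iset hs, card_Isetc hs]
    rw [Finset.prod_congr rfl (fun a _ => h a)]
    exact (Fin.prod_univ_eq_prod_range _ n).trans (prod_piece n k s q hk2)
  have cardBad : ∀ j, k ≤ j → j + k ≤ n → (Bad j).card = s^(2*k) * q^(n-2*k) := by
    intro j hj1 hj2
    rw [hBad]; dsimp only
    rw [Fintype.card_piFinset]
    have h : ∀ a : Fin n, ((if a.val < k ∨ (j ≤ a.val ∧ a.val < j + k) then I else univ) : Finset (Fin q)).card =
        (fun x => if x < k ∨ (j ≤ x ∧ x < j + k) then s else q) a.val := by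
      intro a; dsimp only
      split_ifs <;> simp [hI, card_Iset hs]
    rw [Finset.prod_congr rfl (fun a _ => h a)]
    exact (Fin.prod_univ_eq_prod_range _ n).trans (prod_pieceBad n k s q j hj1 hj2)
  have incl : Base ⊆ GoodFin n q s k ∪ (Finset.Ico k (n-k+1)).biUnion Bad := by
    intro w hw
    rw [hBase, Fintype.mem_piFinset] at hw
    by_cases hg : BGood n q s k w
    · exact Finset.mem_union_left _ (mem_GoodFin.mpr hg)
    · refine Finset.mem_union_right _ ?_
      have c1 : ∀ a : Fin n, a.val < k → (w a).val < s := by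
        intro a ha; have := hw a; rw [htA] at this; dsimp only at this
        rw [if_pos ha] at this; exact mem_Iset.mp this
      have c2 : ∀ a : Fin n, a.val = k → s ≤ (w a).val := by
        intro a ha; have := hw a; rw [htA] at this; dsimp only at this
        rw [if_neg (by omega), if_pos ha] at this
        rw [Finset.mem_compl, mem_Iset] at this; omega
      have c3 : ∀ a : Fin n, a.val = n - 1 → s ≤ (w a).val := by
        intro a ha; have := hw a; rw [htA] at this; dsimp only at this
        rw [if_neg (by omega), if_neg (by omega), if_pos ha] at this
        rw [Finset.mem_compl, mem_Iset] at this; omega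
      have hrun : ¬ (∀ j : ℕ, k ≤ j → j + k ≤ n → ∃ a : Fin n, j ≤ a.val ∧ a.val < j + k ∧ s ≤ (w a).val) := by
        intro hr; exact hg ⟨c1, c2, c3, hr⟩
      push_neg at hrun
      obtain ⟨j, hj1, hj2, hj3⟩ := hrun
      refine Finset.mem_biUnion.mpr ⟨j, Finset.mem_Ico.mpr ⟨hj1, by omega⟩, ?_⟩
      rw [hBad]; dsimp only; rw [Fintype.mem_piFinset]
      intro a
      by_cases hc : a.val < k ∨ (j ≤ a.val ∧ a.val < j + k)
      · rw [if_pos hc, mem_Iset]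
        rcases hc with hcc | ⟨hc1, hc2⟩
        · exact c1 a hcc
        · have := hj3 a hc1 hc2; omega
      · rw [if_neg hc]; exact Finset.mem_univ _
  calc s^k * (q-s)^2 * q^(n-k-2) = Base.card := cardBase.symm
    _ ≤ (GoodFin n q s k ∪ (Finset.Ico k (n-k+1)).biUnion Bad).card := Finset.card_le_card incl
    _ ≤ (GoodFin n q s k).card + ((Finset.Ico k (n-k+1)).biUnion Bad).card := Finset.card_union_le _ _
    _ ≤ (GoodFin n q s k).card + ∑ j ∈ Finset.Ico k (n-k+1), (Bad j).card := by
        gcongr; exact Finset.card_biUnion_le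
    _ ≤ (GoodFin n q s k).card + (n - k + 1 - k) * (s^(2*k) * q^(n-2*k)) := by
        gcongr
        refine le_of_eq ?_
        calc ∑ j ∈ Finset.Ico k (n-k+1), (Bad j).card
            = ∑ j ∈ Finset.Ico k (n-k+1), s^(2*k) * q^(n-2*k) := by
              refine Finset.sum_congr rfl (fun j hj => ?_)
              rw [Finset.mem_Ico] at hj
              exact cardBad j hj.1 (by omega)
          _ = (Finset.Ico k (n-k+1)).card * (s^(2*k) * q^(n-2*k)) := by
              rw [Finset.sum_const, smul_eq_mul]
          _ = (n - k + 1 - k) * (s^(2*k) * q^(n-2*k)) := by rw [Nat.card_Ico]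

lemma countB (n q s : ℕ) (hs : s < q) (hn : 2 ≤ n) :
    s^(n-1) * (q-s) ≤ (GoodFin n q s (n-1)).card := by
  classical
  set I := Iset q s with hI
  set Base := Fintype.piFinset (fun a : Fin n => if a.val < n-1 then I else Iᶜ) with hBase
  have cardBase : Base.card = s^(n-1) * (q-s) := by
    rw [hBase, Fintype.card_piFinset]
    have h : ∀ a : Fin n, ((if a.val < n-1 then I else Iᶜ) : Finset (Fin q)).card =
        (fun x => if x < n-1 then s else q - s) a.val := by
      intro a; dsimp only; split_ifs <;> simp [hI, card_Iset hs, card_Isetc hs]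
    rw [Finset.prod_congr rfl (fun a _ => h a)]
    exact (Fin.prod_univ_eq_prod_range _ n).trans (prod_pieceB n s q (by omega))
  have incl : Base ⊆ GoodFin n q s (n-1) := by
    intro w hw
    rw [hBase, Fintype.mem_piFinset] at hw
    have hIn : ∀ a : Fin n, a.val < n-1 → (w a).val < s := by
      intro a ha; have := hw a; rw [if_pos ha] at this; exact mem_Iset.mp this
    have hOut : ∀ a : Fin n, ¬ a.val < n-1 → s ≤ (w a).val := by
      intro a ha; have := hw a; rw [if_neg ha] at this
      rw [Finset.mem_compl, mem_Iset] at this; omega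
    refine mem_GoodFin.mpr ⟨hIn, ?_, ?_, ?_⟩
    · intro a ha; exact hOut a (by omega)
    · intro a ha; exact hOut a (by omega)
    · intro j hj1 hj2
      refine ⟨⟨n-1, by omega⟩, by simp; omega, by simp; omega, ?_⟩
      exact hOut _ (by simp)
  calc s^(n-1) * (q-s) = Base.card := cardBase.symm
    _ ≤ (GoodFin n q s (n-1)).card := Finset.card_le_card incl

/-! ### The lower-bound construction -/

lemma exists_code (n q : ℕ) (hn : 2 ≤ n) (hq : 2 ≤ q) :
    ∃ C : Finset (Fin n → Fin q),
      NonOverlappingCode (↑C : Set (Fin n → Fin q)) ∧ q^n ≤ 256 * n * C.card := by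
  set s := q / 2 with hsdef
  have hs1 : 1 ≤ s := by omega
  have hs2 : 2*s ≤ q := by omega
  have hs3 : q ≤ 4*s := by omega
  have hsq : s < q := by omega
  have hex : ∃ m : ℕ, 8*n*s^m ≤ q^m := by
    refine ⟨8*n, ?_⟩
    calc 8*n*s^(8*n) ≤ 2^(8*n) * s^(8*n) := by
          have : 8*n ≤ 2^(8*n) := le_of_lt Nat.lt_two_pow_self
          exact Nat.mul_le_mul_right _ this
      _ = (2*s)^(8*n) := by rw [mul_pow]
      _ ≤ q^(8*n) := Nat.pow_le_pow_left hs2 _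
  set k := Nat.find hex with hkdef
  have hk : 8*n*s^k ≤ q^k := Nat.find_spec hex
  have hk1 : 1 ≤ k := by
    rcases Nat.eq_zero_or_pos k with h0 | h0
    · exfalso; rw [h0] at hk; simp at hk; omega
    · exact h0
  by_cases hcase : k + 2 ≤ n
  · -- main case
    refine ⟨GoodFin n q s k, goodFin_nonoverlapping (by omega) (by omega), ?_⟩
    have hcnt := countA n q s k hsq hk1 hcase
    set G := (GoodFin n q s k).card with hG
    set X := s^k * (q-s)^2 * q^(n-k-2) with hX
    set B := (n - k + 1 - k) * (s^(2*k) * q^(n-2*k)) with hB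
    set Y := s^k * q^(n-k) with hY
    -- 8*B ≤ Y
    have f1 : 8*B ≤ Y := by
      rcases Nat.lt_or_ge n (2*k) with h2k | h2k
      · have : n - k + 1 - k = 0 := by omega
        rw [hB, this]; simp [hY]
      · have e : (2:ℕ)*k = k + k := by ring
        calc 8*B ≤ 8*(n * (s^(2*k) * q^(n-2*k))) := by
              rw [hB]; refine Nat.mul_le_mul_left _ (Nat.mul_le_mul_right _ (by omega))
          _ = (8*n*s^k) * (s^k * q^(n-2*k)) := by rw [e, pow_add]; ring
          _ ≤ q^k * (s^k * q^(n-2*k)) := Nat.mul_le_mul_right _ hk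
          _ = s^k * (q^k * q^(n-2*k)) := by ring
          _ = Y := by rw [hY, ← pow_add]; congr 2; omega
    -- Y ≤ 4*X
    have f3 : Y ≤ 4*X := by
      have hq2 : q^2 ≤ 4*(q-s)^2 := by
        have : q ≤ 2*(q-s) := by omega
        calc q^2 ≤ (2*(q-s))^2 := Nat.pow_le_pow_left this 2
          _ = 4*(q-s)^2 := by ring
      calc Y = s^k * (q^2 * q^(n-k-2)) := by
            rw [hY, ← pow_add]; congr 2; omega
        _ ≤ s^k * ((4*(q-s)^2) * q^(n-k-2)) := by
            refine Nat.mul_le_mul_left _ (Nat.mul_le_mul_right _ hq2)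
        _ = 4*X := by rw [hX]; ring
    -- q^n ≤ 32*n*Y
    have f2 : q^n ≤ 32*n*Y := by
      have hmin : q^(k-1) < 8*n*s^(k-1) := by
        have := Nat.find_min hex (m := k-1) (by omega)
        omega
      have hqk : q^k ≤ 32*n*s^k := by
        calc q^k = q * q^(k-1) := by rw [← pow_succ']; congr 1; omega
          _ ≤ q * (8*n*s^(k-1)) := Nat.mul_le_mul_left _ (le_of_lt hmin)
          _ ≤ (4*s) * (8*n*s^(k-1)) := Nat.mul_le_mul_right _ hs3
          _ = 32*n*(s * s^(k-1)) := by ring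
          _ = 32*n*s^k := by rw [← pow_succ']; congr 2; omega
      calc q^n = q^k * q^(n-k) := by rw [← pow_add]; congr 1; omega
        _ ≤ (32*n*s^k) * q^(n-k) := Nat.mul_le_mul_right _ hqk
        _ = 32*n*Y := by rw [hY]; ring
    -- combine: X ≤ G + B, 2Y ≤ 8X ≤ 8G + 8B ≤ 8G + Y so Y ≤ 8G
    have f4 : Y ≤ 8*G := by omega
    calc q^n ≤ 32*n*Y := f2
      _ ≤ 32*n*(8*G) := Nat.mul_le_mul_left _ f4
      _ = 256*n*G := by ring
  · -- fallback case k' = n-1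
    refine ⟨GoodFin n q s (n-1), goodFin_nonoverlapping (by omega) (by omega), ?_⟩
    have hcnt := countB n q s hsq hn
    have hmin : q^(n-2) < 8*n*s^(n-2) := by
      have := Nat.find_min hex (m := n-2) (by omega)
      omega
    set G := (GoodFin n q s (n-1)).card with hG
    calc q^n = q^2 * q^(n-2) := by rw [← pow_add]; congr 1; omega
      _ ≤ q^2 * (8*n*s^(n-2)) := Nat.mul_le_mul_left _ (le_of_lt hmin)
      _ ≤ ((4*s)*(2*(q-s))) * (8*n*s^(n-2)) := by
          refine Nat.mul_le_mul_right _ ?_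
          calc q^2 = q*q := sq q
            _ ≤ (4*s)*(2*(q-s)) := Nat.mul_le_mul hs3 (by omega)
      _ = 64*n*((s * s^(n-2)) * (q-s)) := by ring
      _ = 64*n*(s^(n-1) * (q-s)) := by
          congr 2; rw [← pow_succ']; congr 1; omega
      _ ≤ 64*n*G := Nat.mul_le_mul_left _ hcnt
      _ ≤ 256*n*G := by
          refine Nat.mul_le_mul_right _ ?_; omega

/-! ### The upper bound -/

def emb (n q : ℕ) (u : Fin n → Fin q) (i : Fin n) (x : Fin (n-1) → Fin q) :
    Fin (2*n-1) → Fin q := fun j =>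
  if h1 : i.val ≤ j.val ∧ j.val < i.val + n then
    u ⟨j.val - i.val, by omega⟩
  else if h2 : j.val < i.val then
    x ⟨j.val, by have := i.isLt; omega⟩
  else
    x ⟨j.val - n, by have := i.isLt; have := j.isLt; omega⟩

lemma emb_spec_in (n q : ℕ) (u : Fin n → Fin q) (i : Fin n) (x : Fin (n-1) → Fin q)
    (jv : ℕ) (hj : jv < 2*n-1) (h1 : i.val ≤ jv) (h2 : jv < i.val + n) :
    emb n q u i x ⟨jv, hj⟩ = u ⟨jv - i.val, by omega⟩ := by
  unfold emb
  rw [dif_pos (show i.val ≤ jv ∧ jv < i.val + n from ⟨h1, h2⟩)]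

lemma emb_spec_lt (n q : ℕ) (u : Fin n → Fin q) (i : Fin n) (x : Fin (n-1) → Fin q)
    (jv : ℕ) (hj : jv < 2*n-1) (h1 : jv < i.val) :
    emb n q u i x ⟨jv, hj⟩ = x ⟨jv, by have := i.isLt; omega⟩ := by
  unfold emb
  rw [dif_neg (show ¬(i.val ≤ jv ∧ jv < i.val + n) by omega),
    dif_pos (show jv < i.val by omega)]

lemma emb_spec_ge (n q : ℕ) (u : Fin n → Fin q) (i : Fin n) (x : Fin (n-1) → Fin q)
    (jv : ℕ) (hj : jv < 2*n-1) (h1 : i.val + n ≤ jv) :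
    emb n q u i x ⟨jv, hj⟩ = x ⟨jv - n, by have := i.isLt; omega⟩ := by
  unfold emb
  rw [dif_neg (show ¬(i.val ≤ jv ∧ jv < i.val + n) by omega),
    dif_neg (show ¬ jv < i.val by omega)]

lemma fn_congr {n q : ℕ} (u : Fin n → Fin q) {a b : ℕ} (ha : a < n) (hb : b < n)
    (hab : a = b) : u ⟨a, ha⟩ = u ⟨b, hb⟩ := by subst hab; rfl

lemma fn_congr' {n q : ℕ} (u : Fin n → Fin q) (t : Fin n) {b : ℕ} (hb : b < n)
    (h : b = t.val) : u ⟨b, hb⟩ = u t := by subst h; exact congrArg u (Fin.eta ..)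

lemma emb_offset {n q : ℕ} {u u' : Fin n → Fin q} {i i' : Fin n}
    {x x' : Fin (n-1) → Fin q}
    (heq : emb n q u i x = emb n q u' i' x') (hlt : i.val < i'.val) :
    Overlapping u' u := by
  have hi := i.isLt; have hi' := i'.isLt
  refine ⟨n - (i'.val - i.val), by omega, by omega, Or.inl ?_⟩
  intro t ht
  have hj : i'.val + t < 2*n-1 := by omega
  have h := congrFun heq ⟨i'.val + t, hj⟩
  have hL := emb_spec_in n q u i x (i'.val + t) hj (by omega) (by omega)
  have hR := emb_spec_in n q u' i' x' (i'.val + t) hj (by omega) (by omega)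
  rw [hL, hR] at h
  calc u' ⟨t, by omega⟩ = u' ⟨i'.val + t - i'.val, by omega⟩ := fn_congr u' _ _ (by omega)
    _ = u ⟨i'.val + t - i.val, by omega⟩ := h.symm
    _ = u ⟨n - (n - (i'.val - i.val)) + t, by omega⟩ := fn_congr u _ _ (by omega)

lemma upper_aux (n q : ℕ) (hn : 2 ≤ n) (C : Set (Fin n → Fin q))
    (h : NonOverlappingCode C) :
    C.ncard * (n * q^(n-1)) ≤ q^(2*n-1) := by
  classical
  haveI : Fintype ↥C := Fintype.ofFinite _
  have hinj : Function.Injective (fun p : ↥C × Fin n × (Fin (n-1) → Fin q) =>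
      emb n q p.1.1 p.2.1 p.2.2) := by
    rintro ⟨⟨u, hu⟩, i, x⟩ ⟨⟨u', hu'⟩, i', x'⟩ heq
    simp only at heq
    have hii : i = i' := by
      rcases Nat.lt_trichotomy i.val i'.val with hlt | heqv | hlt
      · exact absurd (emb_offset heq hlt) (h u' hu' u hu)
      · exact Fin.ext heqv
      · exact absurd (emb_offset heq.symm hlt) (h u hu u' hu')
    subst hii
    have huu : u = u' := by
      funext t
      have hti := t.isLt
      have hj : i.val + t.val < 2*n-1 := by have := i.isLt; omega
      have hL := emb_spec_in n q u i x (i.val + t.val) hj (by omega) (by omega)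
      have hR := emb_spec_in n q u' i x' (i.val + t.val) hj (by omega) (by omega)
      have h2 := congrFun heq ⟨i.val + t.val, hj⟩
      rw [hL, hR] at h2
      calc u t = u ⟨i.val + t.val - i.val, by omega⟩ := (fn_congr' u t _ (by omega)).symm
        _ = u' ⟨i.val + t.val - i.val, by omega⟩ := h2
        _ = u' t := fn_congr' u' t _ (by omega)
    subst huu
    have hxx : x = x' := by
      funext t
      have hti := t.isLt
      rcases Nat.lt_or_ge t.val i.val with hlt | hge
      · have hj : t.val < 2*n-1 := by omega
        have hL := emb_spec_lt n q u i x t.val hj hlt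
        have hR := emb_spec_lt n q u i x' t.val hj hlt
        have h2 := congrFun heq ⟨t.val, hj⟩
        rw [hL, hR] at h2
        calc x t = x ⟨t.val, by omega⟩ := (fn_congr' x t _ rfl).symm
          _ = x' ⟨t.val, by omega⟩ := h2
          _ = x' t := fn_congr' x' t _ rfl
      · have hj : t.val + n < 2*n-1 := by omega
        have hL := emb_spec_ge n q u i x (t.val + n) hj (by omega)
        have hR := emb_spec_ge n q u i x' (t.val + n) hj (by omega)
        have h2 := congrFun heq ⟨t.val + n, hj⟩
        rw [hL, hR] at h2
        calc x t = x ⟨t.val + n - n, by omega⟩ := (fn_congr' x t _ (by omega)).symm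
          _ = x' ⟨t.val + n - n, by omega⟩ := h2
          _ = x' t := fn_congr' x' t _ (by omega)
    rw [hxx]
  have hcard := Fintype.card_le_of_injective _ hinj
  have hdom : Fintype.card (↥C × Fin n × (Fin (n-1) → Fin q)) = C.ncard * (n * q^(n-1)) := by
    rw [Fintype.card_prod, Fintype.card_prod, Fintype.card_fin, Fintype.card_fun,
      Fintype.card_fin, Fintype.card_fin, ← Nat.card_eq_fintype_card, Nat.card_coe_set_eq]
  have hcod : Fintype.card (Fin (2*n-1) → Fin q) = q^(2*n-1) := by
    rw [Fintype.card_fun, Fintype.card_fin, Fintype.card_fin]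
  rw [hdom, hcod] at hcard
  exact hcard

/-! ### Main theorem -/

/-- Theorem 6 of Blackburn, "Non-overlapping codes": there are absolute positive
constants `c₁, c₂` with `c₁ q^n/n ≤ C(n,q) ≤ c₂ q^n/n` for all `n, q ≥ 2`. -/
theorem stmt18 :
    ∃ c₁ c₂ : ℝ, 0 < c₁ ∧ 0 < c₂ ∧
      ∀ n q : ℕ, 2 ≤ n → 2 ≤ q →
        c₁ * ((q : ℝ) ^ n / (n : ℝ)) ≤ (maxNOCode n q : ℝ) ∧
        (maxNOCode n q : ℝ) ≤ c₂ * ((q : ℝ) ^ n / (n : ℝ)) := by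
  refine ⟨1/256, 1, by norm_num, by norm_num, fun n q hn hq => ?_⟩
  set S := {m | ∃ C : Set (Fin n → Fin q), NonOverlappingCode C ∧ C.ncard = m} with hS
  have hbdd : BddAbove S := by
    refine ⟨q^(2*n-1), fun m hm => ?_⟩
    obtain ⟨C, hC, hmc⟩ := hm
    have := upper_aux n q hn C hC
    rw [hmc] at this
    have hpos : 1 ≤ n * q^(n-1) := by
      have h1 : 0 < n * q^(n-1) := by positivity
      omega
    calc m = m * 1 := (mul_one m).symm
      _ ≤ m * (n * q^(n-1)) := Nat.mul_le_mul_left _ hpos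
      _ ≤ q^(2*n-1) := this
  have hne : S.Nonempty := by
    refine ⟨0, ∅, ?_, by simp⟩
    intro u hu; exact absurd hu (Set.notMem_empty u)
  have hn0 : (0:ℝ) < n := by positivity
  constructor
  · -- lower bound
    obtain ⟨C, hC, hcard⟩ := exists_code n q hn hq
    have hmem : C.card ∈ S := ⟨↑C, hC, Set.ncard_coe_finset C⟩
    have hle : C.card ≤ maxNOCode n q := le_csSup hbdd hmem
    have hcR : ((q:ℝ))^n ≤ 256 * n * C.card := by exact_mod_cast hcard
    have hleR : (C.card : ℝ) ≤ (maxNOCode n q : ℝ) := by exact_mod_cast hle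
    calc (1/256 : ℝ) * ((q:ℝ)^n / n) = (q:ℝ)^n / (256 * n) := by ring
      _ ≤ (C.card : ℝ) := by rw [div_le_iff₀ (by positivity)]; linarith
      _ ≤ (maxNOCode n q : ℝ) := hleR
  · -- upper bound
    have hmem : maxNOCode n q ∈ S := Nat.sSup_mem hne hbdd
    obtain ⟨C, hC, hmc⟩ := hmem
    have hub := upper_aux n q hn C hC
    rw [hmc] at hub
    have hsplit : q^(2*n-1) = q^n * q^(n-1) := by rw [← pow_add]; congr 1; omega
    rw [hsplit] at hub
    have hq0 : 0 < q^(n-1) := by positivity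
    have hmn : maxNOCode n q * n ≤ q^n := by
      have := Nat.le_of_mul_le_mul_right (by
        calc maxNOCode n q * n * q^(n-1) = maxNOCode n q * (n * q^(n-1)) := by ring
          _ ≤ q^n * q^(n-1) := hub) hq0
      exact this
    have hmnR : (maxNOCode n q : ℝ) * n ≤ (q:ℝ)^n := by exact_mod_cast hmn
    rw [one_mul, le_div_iff₀ hn0]
    exact hmnR
end
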